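/- Let f, g, f₁, g₁ ∈ ℤ[x₁,…,x_n] with gcd(f,g)=1, all having at most T terms, total degree at most D, and coefficients bounded in absolute value by C. Let c₁ ≤ c₂ ≤ ⋯ ≤ c_n be positive integers such that gcd(f(x+c₁,(x+c₂)^{2D+1},…,(x+c_n)^{(2D+1)^{n−1}}), g(x+c₁,…,(x+c_n)^{(2D+1)^{n−1}})) = 1, and let β ≥ 2TC²+1. Set βᵢ = (β+cᵢ)^{(2D+1)^{i−1}}. If g(β₁,…,β_n) ≠ 0, g₁(β₁,…,β_n) ≠ 0, and f(β₁,…,β_n)·g₁(β₁,…,β_n) = f₁(β₁,…,β_n)·g(β₁,…,β_n), then f·g₁ = f₁·g, hence f₁/g₁ = f/g as rational functions. -/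

import Mathlib

open MvPolynomial

private lemma digitBound (b : ℤ) (hb : 1 ≤ b) (d : ℕ) (p : Polynomial ℤ)
    (hdeg : p.natDegree ≤ d) (hc : ∀ k, |p.coeff k| ≤ b - 1) :
    |p.eval b| ≤ b ^ (d + 1) - 1 := by
  rw [Polynomial.eval_eq_sum_range' (Nat.lt_succ_of_le hdeg)]
  calc |∑ i ∈ Finset.range (d + 1), p.coeff i * b ^ i|
      ≤ ∑ i ∈ Finset.range (d + 1), |p.coeff i * b ^ i| :=
        Finset.abs_sum_le_sum_abs _ _
    _ ≤ ∑ i ∈ Finset.range (d + 1), (b - 1) * b ^ i := by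
        apply Finset.sum_le_sum
        intro i _
        rw [abs_mul, abs_pow, abs_of_nonneg (show (0:ℤ) ≤ b by linarith)]
        exact mul_le_mul_of_nonneg_right (hc i) (pow_nonneg (by linarith) i)
    _ = b ^ (d + 1) - 1 := by rw [← Finset.mul_sum, mul_geom_sum]

private lemma digitZero (b : ℤ) (hb : 1 ≤ b) :
    ∀ (d : ℕ) (p : Polynomial ℤ), p.natDegree ≤ d → (∀ k, |p.coeff k| < b) →
      p.eval b = 0 → p = 0 := by
  intro d
  induction d with
  | zero =>
    intro p hdeg hc he
    rw [Polynomial.eq_C_of_natDegree_le_zero hdeg] at he ⊢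
    simp only [Polynomial.eval_C] at he
    rw [he, map_zero]
  | succ d ih =>
    intro p hdeg hc he
    have hp := Polynomial.X_mul_divX_add p
    have he' : b * (p.divX.eval b) + p.coeff 0 = 0 := by
      have h2 := congrArg (Polynomial.eval b) hp
      simp only [Polynomial.eval_add, Polynomial.eval_mul, Polynomial.eval_X,
        Polynomial.eval_C] at h2
      rw [h2, he]
    have hdvd : b ∣ p.coeff 0 := ⟨-(p.divX.eval b), by linarith⟩
    have h0 : p.coeff 0 = 0 := Int.eq_zero_of_abs_lt_dvd hdvd (hc 0)
    have hdx : p.divX.eval b = 0 := by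
      have hb0 : b ≠ 0 := by linarith
      have : b * (p.divX.eval b) = 0 := by linarith
      exact (mul_eq_zero.mp this).resolve_left hb0
    have hdiv0 : p.divX = 0 := by
      apply ih p.divX ?_ ?_ hdx
      · have := Polynomial.natDegree_divX_eq_natDegree_tsub_one (p := p)
        omega
      · intro k
        rw [Polynomial.coeff_divX]
        exact hc (k + 1)
    calc p = Polynomial.X * p.divX + Polynomial.C (p.coeff 0) := hp.symm
      _ = 0 := by rw [hdiv0, h0]; simp

private lemma kroneckerKey (d : ℕ) (H : ℤ) (hH : 0 ≤ H) :
    ∀ (m : ℕ) (B : Fin m → ℤ),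
      (∀ i, H + 2 ≤ B i) →
      (∀ (i : ℕ) (h : i + 1 < m),
        (B ⟨i + 1, h⟩) ^ (d + 1) ≤ B ⟨i, Nat.lt_of_succ_lt h⟩) →
      ∀ P : MvPolynomial (Fin m) ℤ,
        (∀ σ, |P.coeff σ| ≤ H) → P.totalDegree ≤ d →
        (∀ N : ℤ, H < N → (∀ h0 : 0 < m, (B ⟨0, h0⟩) ^ (d + 1) ≤ N) →
          |MvPolynomial.eval B P| < N) ∧
        (MvPolynomial.eval B P = 0 → P = 0) := by
  intro m
  induction m with
  | zero =>
    intro B hB2 hBg P hPc hPd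
    rw [MvPolynomial.eq_C_of_isEmpty P]
    constructor
    · intro N hN _
      simpa using lt_of_le_of_lt (hPc 0) hN
    · intro h
      simp only [eval_C] at h
      rw [h, map_zero]
  | succ m ih =>
    intro B hB2 hBg P hPc hPd
    have hB01 : (1 : ℤ) ≤ B 0 := by linarith [hB2 0]
    set Bt : Fin m → ℤ := fun i => B i.succ with hBtdef
    have hBt2 : ∀ i, H + 2 ≤ Bt i := fun i => hB2 i.succ
    have hBtg : ∀ (i : ℕ) (h : i + 1 < m),
        (Bt ⟨i + 1, h⟩) ^ (d + 1) ≤ Bt ⟨i, Nat.lt_of_succ_lt h⟩ := by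
      intro i h
      have h2 := hBg (i + 1) (by omega)
      simpa [Bt, Fin.succ_mk] using h2
    set q := finSuccEquiv ℤ m P with hq
    set p' := q.map (MvPolynomial.eval Bt) with hp'
    have hQc : ∀ k σ, |(q.coeff k).coeff σ| ≤ H := by
      intro k σ
      rw [hq, finSuccEquiv_coeff_coeff]
      exact hPc _
    have hQd : ∀ k, (q.coeff k).totalDegree ≤ d := by
      intro k
      by_cases h0 : q.coeff k = 0
      · rw [h0]; simp
      · have h2 := totalDegree_coeff_finSuccEquiv_add_le P k h0
        rw [← hq] at h2
        omega
    have hIH := fun k => ih Bt hBt2 hBtg (q.coeff k) (hQc k) (hQd k)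
    have hN0 : ∀ h0 : 0 < m, (Bt ⟨0, h0⟩) ^ (d + 1) ≤ B 0 := by
      intro h0
      have h2 := hBg 0 (by omega)
      have e1 : (⟨0, Nat.lt_of_succ_lt (show 0 + 1 < m + 1 by omega)⟩ : Fin (m+1)) = 0 := rfl
      simpa [Bt, Fin.succ_mk, e1] using h2
    have hcoefflt : ∀ k, |p'.coeff k| < B 0 := by
      intro k
      rw [hp', Polynomial.coeff_map]
      exact (hIH k).1 (B 0) (by linarith [hB2 0]) hN0
    have hqdeg : q.natDegree ≤ d := by
      rw [Polynomial.natDegree_le_iff_coeff_eq_zero]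
      intro k hk
      by_contra h0
      have h2 := totalDegree_coeff_finSuccEquiv_add_le P k h0
      rw [← hq] at h2
      omega
    have hp'deg : p'.natDegree ≤ d :=
      le_trans Polynomial.natDegree_map_le hqdeg
    have hev : MvPolynomial.eval B P = p'.eval (B 0) := by
      conv_lhs => rw [← Fin.cons_self_tail B]
      exact eval_eq_eval_mv_eval' _ _ P
    constructor
    · intro N hN hNB
      have h1 : |p'.eval (B 0)| ≤ (B 0) ^ (d + 1) - 1 :=
        digitBound (B 0) hB01 d p' hp'deg (fun k => by linarith [hcoefflt k])
      have h2 := hNB (Nat.succ_pos m)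
      have e0 : (⟨0, Nat.succ_pos m⟩ : Fin (m+1)) = 0 := rfl
      rw [e0] at h2
      rw [hev]
      linarith
    · intro h
      rw [hev] at h
      have hp'0 : p' = 0 := digitZero (B 0) hB01 d p' hp'deg hcoefflt h
      have hq0 : q = 0 := by
        apply Polynomial.ext
        intro k
        have hz : p'.coeff k = 0 := by rw [hp'0]; simp
        rw [hp', Polynomial.coeff_map] at hz
        rw [Polynomial.coeff_zero]
        exact (hIH k).2 hz
      have : finSuccEquiv ℤ m P = finSuccEquiv ℤ m 0 := by
        rw [← hq, hq0, map_zero]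
      exact (finSuccEquiv ℤ m).injective this

private lemma coeffMulBound {n : ℕ} (p q : MvPolynomial (Fin n) ℤ) (T : ℕ) (C : ℤ)
    (hT : p.support.card ≤ T) (hpc : ∀ σ, |p.coeff σ| ≤ C) (hqc : ∀ σ, |q.coeff σ| ≤ C)
    (σ : (Fin n) →₀ ℕ) : |(p * q).coeff σ| ≤ (T : ℤ) * C ^ 2 := by
  classical
  have hC : 0 ≤ C := le_trans (abs_nonneg _) (hpc 0)
  rw [MvPolynomial.coeff_mul]
  set s := (Finset.HasAntidiagonal.antidiagonal σ).filter (fun x => x.1 ∈ p.support) with hs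
  have hsum : ∑ x ∈ Finset.HasAntidiagonal.antidiagonal σ, p.coeff x.1 * q.coeff x.2
      = ∑ x ∈ s, p.coeff x.1 * q.coeff x.2 := by
    rw [hs]
    refine (Finset.sum_filter_of_ne ?_).symm
    intro x _ hx
    rw [MvPolynomial.mem_support_iff]
    intro h0
    exact hx (by rw [h0, zero_mul])
  rw [hsum]
  have hcard : s.card ≤ T := by
    refine le_trans (Finset.card_le_card_of_injOn (fun x => x.1)
      (fun x hx => (Finset.mem_filter.mp hx).2) ?_) hT
    intro x hx y hy hxy
    have hx' := Finset.HasAntidiagonal.mem_antidiagonal.mp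
      (Finset.mem_filter.mp (Finset.mem_coe.mp hx)).1
    have hy' := Finset.HasAntidiagonal.mem_antidiagonal.mp
      (Finset.mem_filter.mp (Finset.mem_coe.mp hy)).1
    have hxy' : x.1 = y.1 := hxy
    have h3 : y.1 + x.2 = y.1 + y.2 := by rw [← hxy', hx', hxy', hy']
    exact Prod.ext hxy' (add_left_cancel h3)
  calc |∑ x ∈ s, p.coeff x.1 * q.coeff x.2|
      ≤ ∑ x ∈ s, |p.coeff x.1 * q.coeff x.2| := Finset.abs_sum_le_sum_abs _ _
    _ ≤ ∑ _x ∈ s, C ^ 2 := by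
        apply Finset.sum_le_sum
        intro x _
        rw [abs_mul, sq]
        exact mul_le_mul (hpc _) (hqc _) (abs_nonneg _) hC
    _ = (s.card : ℤ) * C ^ 2 := by rw [Finset.sum_const, nsmul_eq_mul]
    _ ≤ (T : ℤ) * C ^ 2 := by
        exact mul_le_mul_of_nonneg_right (by exact_mod_cast hcard) (pow_nonneg hC 2)

theorem stmt19 (n T D : ℕ) (C : ℤ)
    (f g f₁ g₁ : MvPolynomial (Fin n) ℤ)
    (hcop : IsRelPrime f g)
    (hTf : f.support.card ≤ T) (hTg : g.support.card ≤ T)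
    (hTf₁ : f₁.support.card ≤ T) (hTg₁ : g₁.support.card ≤ T)
    (hDf : f.totalDegree ≤ D) (hDg : g.totalDegree ≤ D)
    (hDf₁ : f₁.totalDegree ≤ D) (hDg₁ : g₁.totalDegree ≤ D)
    (hfC : ∀ σ, |f.coeff σ| ≤ C) (hgC : ∀ σ, |g.coeff σ| ≤ C)
    (hf₁C : ∀ σ, |f₁.coeff σ| ≤ C) (hg₁C : ∀ σ, |g₁.coeff σ| ≤ C)
    (c : Fin n → ℤ) (hc0 : ∀ i, 0 < c i)
    (hcmono : ∀ i j : Fin n, i ≤ j → c i ≤ c j)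
    (hcopsub : IsRelPrime
      ((aeval fun i : Fin n =>
        ((Polynomial.X + Polynomial.C (c i) : Polynomial ℤ) ^ (2 * D + 1) ^ (i : ℕ))) f)
      ((aeval fun i : Fin n =>
        ((Polynomial.X + Polynomial.C (c i) : Polynomial ℤ) ^ (2 * D + 1) ^ (i : ℕ))) g))
    (β : ℤ) (hβ : β ≥ 2 * T * C ^ 2 + 1)
    (B : Fin n → ℤ) (hB : ∀ i, B i = (β + c i) ^ (2 * D + 1) ^ (i : ℕ))
    (hgB : eval B g ≠ 0) (hg₁B : eval B g₁ ≠ 0)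
    (heq : eval B f * eval B g₁ = eval B f₁ * eval B g) :
    f * g₁ = f₁ * g := by
  classical
  set d : ℕ := 2 * D with hd
  set H : ℤ := 2 * (T : ℤ) * C ^ 2 with hH
  have hHnn : 0 ≤ H := by positivity
  set P : MvPolynomial (Fin n) ℤ := f * g₁ - f₁ * g with hP
  have hPc : ∀ σ, |P.coeff σ| ≤ H := by
    intro σ
    have h1 := coeffMulBound f g₁ T C hTf hfC hg₁C σ
    have h2 := coeffMulBound f₁ g T C hTf₁ hf₁C hgC σ
    have h3 : P.coeff σ = (f * g₁).coeff σ - (f₁ * g).coeff σ := by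
      rw [hP, MvPolynomial.coeff_sub]
    rw [h3, hH]
    calc |(f * g₁).coeff σ - (f₁ * g).coeff σ|
        ≤ |(f * g₁).coeff σ| + |(f₁ * g).coeff σ| := abs_sub _ _
      _ ≤ 2 * (T : ℤ) * C ^ 2 := by linarith
  have hPd : P.totalDegree ≤ d := by
    rw [hP, sub_eq_add_neg]
    refine le_trans (totalDegree_add _ _) ?_
    rw [totalDegree_neg]
    have h1 : (f * g₁).totalDegree ≤ d :=
      le_trans (totalDegree_mul _ _) (by omega)
    have h2 : (f₁ * g).totalDegree ≤ d :=
      le_trans (totalDegree_mul _ _) (by omega)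
    exact max_le h1 h2
  have hPB : eval B P = 0 := by
    rw [hP, map_sub, map_mul, map_mul, heq, sub_self]
  -- basic bound on B
  have hβH : H + 1 ≤ β := by rw [hH]; linarith [hβ]
  have hBi : ∀ i, H + 2 ≤ B i := by
    intro i
    rw [hB i]
    have h1 : H + 2 ≤ β + c i := by have := hc0 i; linarith
    have h2 : (1 : ℤ) ≤ β + c i := by linarith
    calc H + 2 ≤ β + c i := h1
      _ ≤ (β + c i) ^ (2 * D + 1) ^ (i : ℕ) :=
          le_self_pow₀ h2 (pow_ne_zero _ (by omega))
  have hgrow : ∀ (j : ℕ) (hj : j + 1 < n),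
      (B ⟨j, Nat.lt_of_succ_lt hj⟩) ^ (d + 1) ≤ B ⟨j + 1, hj⟩ := by
    intro j hj
    rw [hB, hB]
    have hle : c ⟨j, Nat.lt_of_succ_lt hj⟩ ≤ c ⟨j + 1, hj⟩ :=
      hcmono _ _ (by simp [Fin.mk_le_mk])
    have hpos : (0 : ℤ) ≤ β + c ⟨j, Nat.lt_of_succ_lt hj⟩ := by
      have := hc0 (⟨j, Nat.lt_of_succ_lt hj⟩ : Fin n); linarith
    calc ((β + c ⟨j, Nat.lt_of_succ_lt hj⟩) ^ (2 * D + 1) ^ j) ^ (d + 1)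
        = (β + c ⟨j, Nat.lt_of_succ_lt hj⟩) ^ (2 * D + 1) ^ (j + 1) := by
          rw [← pow_mul, hd, pow_succ]
      _ ≤ (β + c ⟨j + 1, hj⟩) ^ (2 * D + 1) ^ (j + 1) :=
          pow_le_pow_left₀ hpos (by linarith) _
  -- reverse the variables
  set B' : Fin n → ℤ := fun i => B i.rev with hB'
  set P' : MvPolynomial (Fin n) ℤ := rename Fin.rev P with hP'
  have hP'c : ∀ σ, |P'.coeff σ| ≤ H := by
    intro σ
    have hσ : σ = Finsupp.mapDomain Fin.rev (Finsupp.mapDomain Fin.rev σ) := by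
      rw [← Finsupp.mapDomain_comp]
      have : (Fin.rev ∘ Fin.rev : Fin n → Fin n) = id := by
        funext i; simp [Function.comp, Fin.rev_rev]
      rw [this, Finsupp.mapDomain_id]
    rw [hP', hσ, coeff_rename_mapDomain _ Fin.rev_injective]
    exact hPc _
  have hP'd : P'.totalDegree ≤ d := le_trans (totalDegree_rename_le _ _) hPd
  have hP'B : eval B' P' = 0 := by
    rw [hP', eval_rename]
    have : (B' ∘ Fin.rev) = B := by
      funext i; simp [hB', Function.comp, Fin.rev_rev]
    rw [this, hPB]
  have hB'2 : ∀ i, H + 2 ≤ B' i := fun i => hBi _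
  have hB'g : ∀ (i : ℕ) (h : i + 1 < n),
      (B' ⟨i + 1, h⟩) ^ (d + 1) ≤ B' ⟨i, Nat.lt_of_succ_lt h⟩ := by
    intro i h
    have hj : (n - i - 2) + 1 < n := by omega
    have e1 : (⟨i + 1, h⟩ : Fin n).rev = ⟨n - i - 2, Nat.lt_of_succ_lt hj⟩ := by
      apply Fin.ext
      rw [Fin.val_rev]
      show n - (i + 1 + 1) = n - i - 2
      omega
    have e2 : (⟨i, Nat.lt_of_succ_lt h⟩ : Fin n).rev = ⟨n - i - 2 + 1, hj⟩ := by
      apply Fin.ext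
      rw [Fin.val_rev]
      show n - (i + 1) = n - i - 2 + 1
      omega
    simp only [hB']
    rw [e1, e2]
    exact hgrow (n - i - 2) hj
  have hP'0 : P' = 0 :=
    (kroneckerKey d H hHnn n B' hB'2 hB'g P' hP'c hP'd).2 hP'B
  have hP0 : P = 0 := by
    have hinj : Function.Injective
        (rename (R := ℤ) (Fin.rev : Fin n → Fin n)) :=
      rename_injective _ Fin.rev_injective
    apply hinj
    rw [← hP', hP'0, map_zero]
  have := sub_eq_zero.mp (hP ▸ hP0)
  exact this
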